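/- arXiv:1305.0402 — 4 statements merged into one kernel-verified Lean document; each statement's English description precedes it below -/
import Mathlib

section
/- If θ : ℝ → ℝ satisfies θ'(s) = −a·sin(θ(s) + δ) with a > 0, then θ(s) = −δ + 2·arctan(e^{-as}) is a solution, and every other solution with values in (−δ, −δ+π) is a translate θ(s + c) of it. -/
open Real

theorem stmt9 (a δ : ℝ) (ha : 0 < a)
    (θ₀ : ℝ → ℝ)
    (hθ₀ : ∀ s, θ₀ s = -δ + 2 * Real.arctan (Real.exp (-a * s))) :
    (∀ s : ℝ, HasDerivAt θ₀ (-a * Real.sin (θ₀ s + δ)) s) ∧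
    ∀ θ : ℝ → ℝ, (∀ s : ℝ, HasDerivAt θ (-a * Real.sin (θ s + δ)) s) →
      (∀ s : ℝ, θ s ∈ Set.Ioo (-δ) (-δ + Real.pi)) →
      ∃ c : ℝ, ∀ s : ℝ, θ s = θ₀ (s + c) := by
  have hθ₀fun : θ₀ = fun s => -δ + 2 * Real.arctan (Real.exp (-a * s)) := funext hθ₀
  subst hθ₀fun
  constructor
  · intro s
    set x := Real.exp (-a * s) with hxdef
    have hxpos : 0 < x := Real.exp_pos _
    have h1 : HasDerivAt (fun s : ℝ => -a * s) (-a) s := by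
      simpa using (hasDerivAt_id s).const_mul (-a)
    have h2 : HasDerivAt (fun s : ℝ => Real.exp (-a * s)) (x * -a) s := by
      simpa [hxdef] using h1.exp
    have h3 : HasDerivAt (fun s : ℝ => Real.arctan (Real.exp (-a * s)))
        ((1 / (1 + x ^ 2)) * (x * -a)) s :=
      by have := (Real.hasDerivAt_arctan x).comp s h2; exact this
    have h4 : HasDerivAt (fun s : ℝ => -δ + 2 * Real.arctan (Real.exp (-a * s)))
        (2 * ((1 / (1 + x ^ 2)) * (x * -a))) s := (h3.const_mul 2).const_add (-δ)
    convert h4 using 1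
    have harg : -δ + 2 * Real.arctan x + δ = 2 * Real.arctan x := by ring
    rw [harg, Real.sin_two_mul, Real.sin_arctan, Real.cos_arctan]
    have hs : Real.sqrt (1 + x ^ 2) * Real.sqrt (1 + x ^ 2) = 1 + x ^ 2 :=
      Real.mul_self_sqrt (by positivity)
    have hsne : Real.sqrt (1 + x ^ 2) ≠ 0 := by positivity
    have hne : (1 : ℝ) + x ^ 2 ≠ 0 := by positivity
    rw [mul_one_div, mul_div_assoc, div_div, hs]
    field_simp
  · intro θ hθ hmem
    set v : ℝ → ℝ := fun s => Real.log (Real.tan ((θ s + δ) / 2)) with hvdef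
    have key : ∀ s, HasDerivAt (fun t => v t + a * t) 0 s := by
      intro s
      have hmem' := hmem s
      have h0 : 0 < θ s + δ := by linarith [hmem'.1]
      have hπ : θ s + δ < Real.pi := by linarith [hmem'.2]
      set x := (θ s + δ) / 2 with hxdef
      have hx0 : 0 < x := by positivity
      have hxlt : x < Real.pi / 2 := by simp only [hxdef]; linarith
      have hcos : 0 < Real.cos x := Real.cos_pos_of_mem_Ioo ⟨by linarith, hxlt⟩
      have hsin : 0 < Real.sin x := Real.sin_pos_of_pos_of_lt_pi hx0 (by linarith [Real.pi_pos])
      have htanpos : 0 < Real.tan x := by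
        rw [Real.tan_eq_sin_div_cos]; positivity
      have hd1 : HasDerivAt (fun t => (θ t + δ) / 2) ((-a * Real.sin (θ s + δ)) / 2) s :=
        ((hθ s).add_const δ).div_const 2
      have hd2 : HasDerivAt Real.tan (1 / Real.cos x ^ 2) x :=
        Real.hasDerivAt_tan (ne_of_gt hcos)
      have hd3 : HasDerivAt (fun t => Real.tan ((θ t + δ) / 2))
          ((1 / Real.cos x ^ 2) * ((-a * Real.sin (θ s + δ)) / 2)) s := by
        exact hd2.comp s hd1
      have hd4 : HasDerivAt v
          ((Real.tan x)⁻¹ * ((1 / Real.cos x ^ 2) * ((-a * Real.sin (θ s + δ)) / 2))) s :=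
        by have := (Real.hasDerivAt_log (ne_of_gt htanpos)).comp s hd3; exact this
      have hderiv_eq :
          (Real.tan x)⁻¹ * ((1 / Real.cos x ^ 2) * ((-a * Real.sin (θ s + δ)) / 2)) = -a := by
        have hsin2 : Real.sin (θ s + δ) = 2 * Real.sin x * Real.cos x := by
          have : θ s + δ = 2 * x := by simp [hxdef]; ring
          rw [this, Real.sin_two_mul]
        rw [hsin2, Real.tan_eq_sin_div_cos]
        field_simp
      have hd5 : HasDerivAt (fun t => a * t) a s := by
        simpa using (hasDerivAt_id s).const_mul a
      have := (hd4.add hd5)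
      rw [hderiv_eq] at this
      exact this.congr_deriv (by ring)
    have hconst : ∀ s, v s + a * s = v 0 + a * 0 := by
      intro s
      exact is_const_of_deriv_eq_zero (fun t => (key t).differentiableAt)
        (fun t => (key t).deriv) s 0
    refine ⟨-(v 0) / a, fun s => ?_⟩
    have hmem' := hmem s
    have h0 : 0 < θ s + δ := by linarith [hmem'.1]
    have hπ : θ s + δ < Real.pi := by linarith [hmem'.2]
    set x := (θ s + δ) / 2 with hxdef
    have hx0 : 0 < x := by positivity
    have hxlt : x < Real.pi / 2 := by simp only [hxdef]; linarith
    have hcos : 0 < Real.cos x := Real.cos_pos_of_mem_Ioo ⟨by linarith, hxlt⟩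
    have hsin : 0 < Real.sin x := Real.sin_pos_of_pos_of_lt_pi hx0 (by linarith [Real.pi_pos])
    have htanpos : 0 < Real.tan x := by rw [Real.tan_eq_sin_div_cos]; positivity
    have hv : v s = v 0 - a * s := by have := hconst s; linarith
    have hexp : Real.exp (-a * (s + -(v 0) / a)) = Real.tan x := by
      have harg : -a * (s + -(v 0) / a) = v 0 - a * s := by
        field_simp; ring
      rw [harg, ← hv]
      exact Real.exp_log htanpos
    have harctan : Real.arctan (Real.exp (-a * (s + -(v 0) / a))) = x := by
      rw [hexp]
      exact Real.arctan_tan (by linarith) hxlt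
    simp only [harctan]
    simp [hxdef]; ring
end

section
/- Suppose α : ℝ → ℝ² is a unit-speed curve with α'(s) = (cos θ(s), sin θ(s)), and β(t) = α(vt) for some v > 0. If the Newton equation m v²θ'(s)·n(s) = λ(s)·n(s) − tan δ·λ(s)·α'(s) − (0, mg) holds with n(s) = (−sin θ(s), cos θ(s)) and m > 0, then λ(s) = −m g cot δ · sin θ(s) and θ'(s) = −(g/(v² sin δ))·sin(θ(s) + δ). -/
open Real

theorem stmt13 (m v g δ : ℝ) (hm : 0 < m) (hv : 0 < v) (hg : 0 < g)
    (hδ1 : 0 < δ) (hδ2 : δ < Real.pi / 4)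
    (θ dθ L : ℝ → ℝ) (n : ℝ → ℝ × ℝ)
    (hθ : ∀ s, HasDerivAt θ (dθ s) s)
    (hn : ∀ s, n s = (-Real.sin (θ s), Real.cos (θ s)))
    (hNewton : ∀ s : ℝ,
      (m * v ^ 2 * dθ s) • n s
        = L s • n s - (Real.tan δ * L s) • (Real.cos (θ s), Real.sin (θ s))
          - (0, m * g)) :
    ∀ s : ℝ, L s = -m * g * Real.cot δ * Real.sin (θ s) ∧
      dθ s = -(g / (v ^ 2 * Real.sin δ)) * Real.sin (θ s + δ) := by
  intro s
  have hsδ : 0 < Real.sin δ := Real.sin_pos_of_pos_of_lt_pi hδ1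
    (lt_trans hδ2 (by linarith [Real.pi_pos]))
  have hcδ : 0 < Real.cos δ := Real.cos_pos_of_mem_Ioo
    ⟨by linarith [Real.pi_pos], by linarith [Real.pi_pos]⟩
  have hN := hNewton s
  rw [hn] at hN
  have h1 : m * v ^ 2 * dθ s * (-Real.sin (θ s))
      = L s * (-Real.sin (θ s)) - Real.tan δ * L s * Real.cos (θ s) - 0 := by
    have := congrArg Prod.fst hN
    simpa [Prod.smul_def, smul_eq_mul] using this
  have h2 : m * v ^ 2 * dθ s * Real.cos (θ s)
      = L s * Real.cos (θ s) - Real.tan δ * L s * Real.sin (θ s) - m * g := by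
    have := congrArg Prod.snd hN
    simpa [Prod.smul_def, smul_eq_mul] using this
  have hpyth := Real.sin_sq_add_cos_sq (θ s)
  have htan : Real.tan δ = Real.sin δ / Real.cos δ := Real.tan_eq_sin_div_cos δ
  have hcot : Real.cot δ = Real.cos δ / Real.sin δ := Real.cot_eq_cos_div_sin δ
  have hkey : Real.tan δ * L s = -(m * g * Real.sin (θ s)) := by
    linear_combination Real.cos (θ s) * h1 + Real.sin (θ s) * h2 +
      (- (Real.tan δ * L s)) * hpyth
  have hL : L s = -m * g * Real.cot δ * Real.sin (θ s) := by
    rw [htan] at hkey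
    rw [hcot]
    field_simp at hkey ⊢
    linear_combination hkey
  refine ⟨hL, ?_⟩
  have hdθ : m * v ^ 2 * dθ s = L s - m * g * Real.cos (θ s) := by
    linear_combination (-Real.sin (θ s)) * h1 + Real.cos (θ s) * h2 +
      (-(m * v ^ 2 * dθ s - L s)) * hpyth
  rw [hL, hcot] at hdθ
  rw [Real.sin_add]
  have hv2 : (0:ℝ) < v ^ 2 := by positivity
  field_simp at hdθ ⊢
  ring_nf at hdθ ⊢
  nlinarith [hdθ, hm.ne', hsδ.ne']
end

section
/- Let s₀ = arcsinh(cot δ)/a, λ(t) = m g cot δ · y_δ'(s₀ − vt) and β(t) = α_δ(s₀ − vt)-reparametrized curve γ_δ(vt). Then (0, −mg) + λ(t)·n_δ(vt) + tan δ·λ(t)·α_δ'(s₀ − vt) = m v²·α_δ''(s₀ − vt), i.e. Newton's second law with friction coefficient tan δ holds on the lower ramp, and λ(t) ≥ 0 for t ≥ 0. -/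
set_option maxHeartbeats 1000000

open Real

/-- Inverse cotangent with values in (0, π). -/
noncomputable def arccot (x : ℝ) : ℝ := Real.pi / 2 - Real.arctan x

noncomputable def X1 (a : ℝ) : ℝ → ℝ := fun s => (1 - Real.exp (-a*s)^2)/(1 + Real.exp (-a*s)^2)
noncomputable def Y1 (a : ℝ) : ℝ → ℝ := fun s => 2 * Real.exp (-a*s)/(1 + Real.exp (-a*s)^2)
noncomputable def X2 (a : ℝ) : ℝ → ℝ := fun s => 4*a*Real.exp (-a*s)^2/(1 + Real.exp (-a*s)^2)^2
noncomputable def Y2 (a : ℝ) : ℝ → ℝ := fun s => 2*a*Real.exp (-a*s)*(Real.exp (-a*s)^2 - 1)/(1 + Real.exp (-a*s)^2)^2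

lemma hEd (a s : ℝ) : HasDerivAt (fun u : ℝ => Real.exp (-a*u)) (-a * Real.exp (-a*s)) s := by
  have h := ((hasDerivAt_id s).const_mul (-a)).exp
  simpa [mul_comm] using h

lemma hX1d (a s : ℝ) : HasDerivAt (X1 a) (X2 a s) s := by
  have hE := hEd a s
  have hD : (1 + Real.exp (-a*s)^2) ≠ 0 := by positivity
  have hnum : HasDerivAt (fun u : ℝ => 1 - Real.exp (-a*u)^2)
      (-(2 * Real.exp (-a*s) ^ 1 * (-a * Real.exp (-a*s)))) s := (hE.pow 2).const_sub 1
  have hden : HasDerivAt (fun u : ℝ => 1 + Real.exp (-a*u)^2)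
      (2 * Real.exp (-a*s) ^ 1 * (-a * Real.exp (-a*s))) s := (hE.pow 2).const_add 1
  have h := hnum.div hden hD
  refine h.congr_deriv ?_
  unfold X2
  field_simp
  ring

lemma hY1d (a s : ℝ) : HasDerivAt (Y1 a) (Y2 a s) s := by
  have hE := hEd a s
  have hD : (1 + Real.exp (-a*s)^2) ≠ 0 := by positivity
  have hnum : HasDerivAt (fun u : ℝ => 2 * Real.exp (-a*u))
      (2 * (-a * Real.exp (-a*s))) s := hE.const_mul 2
  have hden : HasDerivAt (fun u : ℝ => 1 + Real.exp (-a*u)^2)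
      (2 * Real.exp (-a*s) ^ 1 * (-a * Real.exp (-a*s))) s := (hE.pow 2).const_add 1
  have h := hnum.div hden hD
  refine h.congr_deriv ?_
  unfold Y2
  field_simp
  ring

theorem stmt14 (g v m δ : ℝ) (hg : 0 < g) (hv : 0 < v) (hm : 0 < m)
    (hδ1 : 0 < δ) (hδ2 : δ < Real.pi / 4)
    (a : ℝ) (ha : a = g / (v ^ 2 * Real.sin δ))
    (x y xδ yδ : ℝ → ℝ) (αδ : ℝ → ℝ × ℝ) (nδ : ℝ → ℝ × ℝ) (L : ℝ → ℝ) (s₀ : ℝ)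
    (hx : ∀ s, x s = s + (1 / a) * Real.log (1 + Real.exp (-2 * a * s)))
    (hy : ∀ s, y s = (2 / a) * arccot (Real.exp (-a * s)))
    (hxδ : ∀ s, xδ s = Real.cos δ * x s + Real.sin δ * y s)
    (hyδ : ∀ s, yδ s = -Real.sin δ * x s + Real.cos δ * y s)
    (hαδ : ∀ s, αδ s = (xδ s, yδ s))
    (hs₀ : s₀ = Real.arsinh (Real.cot δ) / a)
    (hnδ : ∀ s, nδ s = (deriv yδ (s₀ - s), -(deriv xδ (s₀ - s))))
    (hL : ∀ t, L t = m * g * Real.cot δ * deriv yδ (s₀ - v * t)) :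
    (∀ t : ℝ,
      (0, -(m * g)) + L t • nδ (v * t) + (Real.tan δ * L t) • deriv αδ (s₀ - v * t)
        = (m * v ^ 2) • deriv (deriv αδ) (s₀ - v * t)) ∧
    ∀ t : ℝ, 0 ≤ t → 0 ≤ L t := by
  have hπ := Real.pi_pos
  have hsδ : 0 < Real.sin δ := Real.sin_pos_of_pos_of_lt_pi hδ1 (by linarith)
  have hcδ : 0 < Real.cos δ := Real.cos_pos_of_mem_Ioo ⟨by linarith, by linarith⟩
  have ha0 : 0 < a := by rw [ha]; positivity
  have hane : a ≠ 0 := ne_of_gt ha0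
  have hgeq : g = a * v ^ 2 * Real.sin δ := by
    rw [ha]; field_simp
  have hcot : Real.cot δ = Real.cos δ / Real.sin δ := Real.cot_eq_cos_div_sin δ
  have htan : Real.tan δ = Real.sin δ / Real.cos δ := Real.tan_eq_sin_div_cos δ
  have hpy : Real.sin δ ^ 2 + Real.cos δ ^ 2 = 1 := Real.sin_sq_add_cos_sq δ
  -- first derivatives of x and y
  have hxd : ∀ s, HasDerivAt x (X1 a s) s := by
    intro s
    have h1 : HasDerivAt (fun u : ℝ => Real.exp (-2*a*u)) (-(2*a) * Real.exp (-(2*a)*s)) s := by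
      simpa using hEd (2*a) s
    have h2 : HasDerivAt (fun u : ℝ => 1 + Real.exp (-2*a*u)) (-(2*a) * Real.exp (-(2*a)*s)) s :=
      h1.const_add 1
    have hD2 : (1 + Real.exp (-2*a*s)) ≠ 0 := by positivity
    have h3 := (h2.log hD2).const_mul (1/a)
    have h4 := (hasDerivAt_id s).add h3
    have hxf : x = fun s => s + 1/a * Real.log (1 + Real.exp (-2*a*s)) := funext hx
    rw [hxf]
    refine h4.congr_deriv ?_
    have hE2 : Real.exp (-(2*a)*s) = Real.exp (-a*s) ^ 2 := by
      rw [sq, ← Real.exp_add]; ring_nf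
    have hE2' : Real.exp (-2*a*s) = Real.exp (-a*s) ^ 2 := by
      rw [sq, ← Real.exp_add]; ring_nf
    unfold X1
    rw [hE2, hE2']
    have hD : (1 + Real.exp (-a*s)^2) ≠ 0 := by positivity
    field_simp
    ring
  have hyd : ∀ s, HasDerivAt y (Y1 a s) s := by
    intro s
    have h1 : HasDerivAt (fun u : ℝ => Real.arctan (Real.exp (-a*u)))
        ((1/(1 + Real.exp (-a*s)^2)) * (-a * Real.exp (-a*s))) s :=
      (Real.hasDerivAt_arctan _).comp s (hEd a s)
    have h2 := (h1.const_sub (Real.pi/2)).const_mul (2/a)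
    have hyf : y = fun s => (2/a) * (Real.pi/2 - Real.arctan (Real.exp (-a*s))) := by
      funext s; rw [hy s]; rfl
    rw [hyf]
    refine h2.congr_deriv ?_
    unfold Y1
    have hD : (1 + Real.exp (-a*s)^2) ≠ 0 := by positivity
    field_simp
  -- derivatives of rotated components
  have hxδd : ∀ s, HasDerivAt xδ (Real.cos δ * X1 a s + Real.sin δ * Y1 a s) s := by
    intro s
    have h := ((hxd s).const_mul (Real.cos δ)).add ((hyd s).const_mul (Real.sin δ))
    have hf : xδ = fun s => Real.cos δ * x s + Real.sin δ * y s := funext hxδ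
    rw [hf]; exact h
  have hyδd : ∀ s, HasDerivAt yδ (-Real.sin δ * X1 a s + Real.cos δ * Y1 a s) s := by
    intro s
    have h := ((hxd s).const_mul (-Real.sin δ)).add ((hyd s).const_mul (Real.cos δ))
    have hf : yδ = fun s => -Real.sin δ * x s + Real.cos δ * y s := funext hyδ
    rw [hf]; exact h
  have hαδd : ∀ s, HasDerivAt αδ
      (Real.cos δ * X1 a s + Real.sin δ * Y1 a s, -Real.sin δ * X1 a s + Real.cos δ * Y1 a s) s := by
    intro s
    have hf : αδ = fun s => (xδ s, yδ s) := funext hαδ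
    rw [hf]; exact (hxδd s).prodMk (hyδd s)
  have hderiv1 : deriv αδ = fun s =>
      ((Real.cos δ * X1 a s + Real.sin δ * Y1 a s, -Real.sin δ * X1 a s + Real.cos δ * Y1 a s) : ℝ × ℝ) :=
    funext fun s => (hαδd s).deriv
  have hαδd2 : ∀ s, HasDerivAt (deriv αδ)
      (Real.cos δ * X2 a s + Real.sin δ * Y2 a s, -Real.sin δ * X2 a s + Real.cos δ * Y2 a s) s := by
    intro s
    rw [hderiv1]
    exact ((((hX1d a s).const_mul _).add ((hY1d a s).const_mul _)).prodMk
      (((hX1d a s).const_mul _).add ((hY1d a s).const_mul _)))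
  have hL' : ∀ t, L t = m * a * v ^ 2 * Real.cos δ * deriv yδ (s₀ - v * t) := by
    intro t
    rw [hL, hcot, hgeq]
    field_simp
  have hTL : ∀ t, Real.tan δ * L t = m * a * v ^ 2 * Real.sin δ * deriv yδ (s₀ - v * t) := by
    intro t
    rw [hL, htan, hcot, hgeq]
    field_simp
  constructor
  · intro t
    set u := s₀ - v * t with hu
    rw [hTL, hL', hnδ, (hαδd u).deriv, (hαδd2 u).deriv, (hyδd u).deriv, (hxδd u).deriv, hgeq]
    have hE : (0:ℝ) < Real.exp (-a*u) := Real.exp_pos _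
    have hD : (1 + Real.exp (-a*u)^2) ≠ 0 := by positivity
    rw [Prod.ext_iff]
    constructor
    · simp only [Prod.fst_add, Prod.smul_fst, Prod.mk_add_mk, Prod.smul_mk, smul_eq_mul]
      unfold X1 Y1 X2 Y2
      set E := Real.exp (-a*u) with hEdef
      set D := 1 + E^2 with hDdef
      field_simp
      linear_combination (m*a*v^2*2*E*(-Real.sin δ*(1-E^2)+2*Real.cos δ*E)) * hpy
    · simp only [Prod.snd_add, Prod.smul_snd, Prod.mk_add_mk, Prod.smul_mk, smul_eq_mul]
      unfold X1 Y1 X2 Y2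
      set E := Real.exp (-a*u) with hEdef
      set D := 1 + E^2 with hDdef
      field_simp
      linear_combination ((-Real.sin δ*(1-E^2)+2*Real.cos δ*E)*(E^2-1)) * hpy
        + (-(Real.sin δ*(1+E^2+D))) * hDdef
  · intro t ht
    have hF1 : Real.exp (a*s₀) * Real.exp (-a*s₀) = 1 := by
      rw [← Real.exp_add, show a*s₀ + -a*s₀ = 0 by ring, Real.exp_zero]
    have has₀ : a * s₀ = Real.arsinh (Real.cot δ) := by
      rw [hs₀]; field_simp
    have h1 : Real.sinh (a*s₀) = Real.cot δ := by rw [has₀, Real.sinh_arsinh]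
    rw [Real.sinh_eq, show -(a*s₀) = -a*s₀ by ring, hcot] at h1
    have h1'' : Real.sin δ * (Real.exp (a*s₀) - Real.exp (-a*s₀)) = 2 * Real.cos δ := by
      field_simp at h1
      rw [show -(a*s₀) = -a*s₀ by ring] at h1
      linear_combination h1
    have hE0 : Real.sin δ * Real.exp (-a*s₀)^2 + 2*Real.cos δ*Real.exp (-a*s₀)
        - Real.sin δ = 0 := by
      linear_combination (-Real.exp (-a*s₀)) * h1'' + Real.sin δ * hF1
    rw [hL, (hyδd (s₀ - v*t)).deriv]
    set u := s₀ - v * t with hu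
    have hEF : Real.exp (-a*s₀) ≤ Real.exp (-a*u) := by
      apply Real.exp_le_exp.2
      rw [hu]
      nlinarith [mul_nonneg (mul_nonneg ha0.le hv.le) ht]
    have hEp : (0:ℝ) < Real.exp (-a*u) := Real.exp_pos _
    have hFp : (0:ℝ) < Real.exp (-a*s₀) := Real.exp_pos _
    unfold X1 Y1
    set E := Real.exp (-a*u) with hEd2
    set F := Real.exp (-a*s₀) with hFd2
    have hD : (0:ℝ) < 1 + E^2 := by positivity
    have hval : -Real.sin δ * ((1 - E^2)/(1 + E^2)) + Real.cos δ * (2*E/(1 + E^2))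
        = ((E - F) * (Real.sin δ * (E + F) + 2*Real.cos δ)) / (1 + E^2) := by
      field_simp
      linear_combination hE0
    have hnn : 0 ≤ -Real.sin δ * ((1 - E^2)/(1 + E^2)) + Real.cos δ * (2*E/(1 + E^2)) := by
      rw [hval]
      apply div_nonneg _ hD.le
      apply mul_nonneg (by linarith)
      nlinarith
    have hcotnn : 0 ≤ Real.cot δ := by
      rw [hcot]; exact div_nonneg hcδ.le hsδ.le
    exact mul_nonneg (mul_nonneg (mul_nonneg hm.le hg.le) hcotnn) hnn
end

section
/- Let γ : ℝ → Σ satisfy γ'(s) = X(γ(s)) with X(y) = −(g/v²)(e₃ − (e₃·y)y + (y₃/μ)N(y)), and set α(s) = ∫₀ˢ γ(u) du, β(t) = α(vt), λ(y) = −(g/μ)y₃ ≥ 0. Then m·β''(t) = −m g e₃ + m λ(γ(vt)) N(γ(vt)) − m λ(γ(vt)) μ γ(vt), i.e. Newton's second law with gravity, normal force of magnitude mλ, and kinetic friction with coefficient μ holds, and ‖β'(t)‖ = v. -/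
open Real
open scoped RealInnerProductSpace

theorem stmt17 (g v m μ : ℝ) (hg : 0 < g) (hv : 0 < v) (hm : 0 < m)
    (hμ1 : 0 < μ) (hμ2 : μ < 1)
    (S : Set (EuclideanSpace ℝ (Fin 3)))
    (hS : S = {y : EuclideanSpace ℝ (Fin 3) | ‖y‖ = 1 ∧ y 2 ≤ 0})
    (N : EuclideanSpace ℝ (Fin 3) → EuclideanSpace ℝ (Fin 3))
    (hNunit : ∀ y ∈ S, ‖N y‖ = 1)
    (hNtang : ∀ y ∈ S, ⟪N y, y⟫ = 0)
    (e₃ : EuclideanSpace ℝ (Fin 3)) (he₃ : e₃ = EuclideanSpace.single 2 1)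
    (X : EuclideanSpace ℝ (Fin 3) → EuclideanSpace ℝ (Fin 3))
    (hX : ∀ y, X y = (-(g / v ^ 2)) • (e₃ - ⟪e₃, y⟫ • y + (y 2 / μ) • N y))
    (γ : ℝ → EuclideanSpace ℝ (Fin 3))
    (hγS : ∀ s, γ s ∈ S)
    (hγ : ∀ s : ℝ, HasDerivAt γ (X (γ s)) s)
    (L : EuclideanSpace ℝ (Fin 3) → ℝ)
    (hL : ∀ y, L y = -(g / μ) * y 2)
    (α β : ℝ → EuclideanSpace ℝ (Fin 3))
    (hα : ∀ s, α s = ∫ u in (0:ℝ)..s, γ u)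
    (hβ : ∀ t, β t = α (v * t)) :
    ∀ t : ℝ,
      (0 ≤ L (γ (v * t))) ∧
      m • deriv (deriv β) t
        = -(m * g) • e₃ + (m * L (γ (v * t))) • N (γ (v * t))
          - (m * L (γ (v * t)) * μ) • γ (v * t) ∧
      ‖deriv β t‖ = v := by
  intro t
  -- continuity of γ
  have hγcont : Continuous γ := by
    have : Differentiable ℝ γ := fun s => (hγ s).differentiableAt
    exact this.continuous
  -- α has derivative γ s at each s
  have hαderiv : ∀ s : ℝ, HasDerivAt α (γ s) s := by
    intro s
    have hfe : α = fun s => ∫ u in (0:ℝ)..s, γ u := funext hα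
    rw [hfe]
    exact intervalIntegral.integral_hasDerivAt_right (hγcont.intervalIntegrable 0 s)
      hγcont.aestronglyMeasurable.stronglyMeasurableAtFilter hγcont.continuousAt
  -- β has derivative v • γ (v * t)
  have hβderiv : ∀ t : ℝ, HasDerivAt β (v • γ (v * t)) t := by
    intro t
    have hid : HasDerivAt (fun t : ℝ => v * t) v t := by
      simpa using (hasDerivAt_id t).const_mul v
    have := (hαderiv (v * t)).scomp t hid
    have hfe : β = fun t => α (v * t) := funext hβ
    rw [hfe]
    exact this
  have hderivβ : deriv β = fun t => v • γ (v * t) := by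
    funext t; exact (hβderiv t).deriv
  -- second derivative
  have hγvt : ∀ t : ℝ, HasDerivAt (fun t => γ (v * t)) (v • X (γ (v * t))) t := by
    intro t
    have hid : HasDerivAt (fun t : ℝ => v * t) v t := by
      simpa using (hasDerivAt_id t).const_mul v
    exact (hγ (v * t)).scomp t hid
  have hβ'' : deriv (deriv β) t = v • (v • X (γ (v * t))) := by
    rw [hderivβ]
    exact (((hγvt t).const_smul v)).deriv
  set y := γ (v * t) with hy
  have hyS := hγS (v * t)
  rw [hS] at hyS
  obtain ⟨hynorm, hy2⟩ := hyS
  have hLnn : 0 ≤ L y := by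
    rw [hL]
    have : 0 ≤ g / μ := le_of_lt (div_pos hg hμ1)
    nlinarith
  refine ⟨hLnn, ?_, ?_⟩
  · rw [hβ'', hX, hL]
    have hinner : ⟪e₃, y⟫ = y 2 := by
      rw [he₃, EuclideanSpace.inner_single_left]
      simp
    rw [hinner]
    have hvne : (v : ℝ) ≠ 0 := ne_of_gt hv
    have hμne : (μ : ℝ) ≠ 0 := ne_of_gt hμ1
    match_scalars <;> field_simp <;> ring
  · rw [hderivβ]
    rw [norm_smul, ← hy, hynorm]
    simp [abs_of_pos hv]
end
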